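/- Let S ≥ 1, let Q and Q̄ be S×S row-stochastic real matrices, α ∈ (0,1), let c ∈ ℝ^S be nonnegative with ‖c‖_∞ > 0, and let v = (1−α)(I − αQ)^{-1} c and v̄ = (1−α)(I − αQ̄)^{-1} c. Fix ε_rel ∈ (0,1) and ε_abs ∈ (0, 2‖c‖_∞), let T̄ = ⌈log(2‖c‖_∞/ε_abs)/(1−α)⌉ and λ = log(1 + ε_rel/2)/T̄. If |Q̄(s,s') − Q(s,s')| ≤ λ Q(s,s') for all states s, s', then for every state s: |v̄(s) − v(s)| ≤ (ε_rel/2) v(s) + ε_abs/2. -/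

import Mathlib

set_option maxHeartbeats 1000000

open Matrix

attribute [local instance] Matrix.linftyOpNormedRing Matrix.linftyOpNormedAlgebra

private theorem matrixComplete (S : ℕ) : CompleteSpace (Matrix (Fin S) (Fin S) ℝ) :=
  (inferInstance : CompleteSpace (Fin S → Fin S → ℝ))

attribute [local instance] matrixComplete

/-- The linfty operator norm of a substochastic matrix is at most 1. -/
private theorem stoch_norm_le_one {S : ℕ} (Q : Matrix (Fin S) (Fin S) ℝ)
    (h0 : ∀ i j, 0 ≤ Q i j) (h1 : ∀ i, ∑ j, Q i j = 1) : ‖Q‖ ≤ 1 := by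
  rw [Matrix.linfty_opNorm_def]
  rw [show ((1 : ℝ)) = ((1 : NNReal) : ℝ) by norm_num, NNReal.coe_le_coe]
  apply Finset.sup_le
  intro i _
  rw [← NNReal.coe_le_coe]
  push_cast
  calc ∑ j, (‖Q i j‖₊ : ℝ) = ∑ j, Q i j := by
        refine Finset.sum_congr rfl fun j _ => ?_
        simp [Real.norm_eq_abs, abs_of_nonneg (h0 i j)]
    _ = 1 := h1 i
    _ ≤ 1 := le_refl 1

/-- Entrywise nonnegativity and monotonicity of matrix powers. -/
private theorem pow_entry_le {S : ℕ} (A B : Matrix (Fin S) (Fin S) ℝ)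
    (hA : ∀ i j, 0 ≤ A i j) (hAB : ∀ i j, A i j ≤ B i j) (n : ℕ) :
    ∀ i j, 0 ≤ (A ^ n) i j ∧ (A ^ n) i j ≤ (B ^ n) i j := by
  induction n with
  | zero =>
    intro i j
    simp only [pow_zero, Matrix.one_apply]
    split_ifs <;> norm_num
  | succ n ih =>
    intro i j
    rw [pow_succ, pow_succ, Matrix.mul_apply, Matrix.mul_apply]
    constructor
    · exact Finset.sum_nonneg fun k _ => mul_nonneg (ih i k).1 (hA k j)
    · refine Finset.sum_le_sum fun k _ => ?_
      exact mul_le_mul (ih i k).2 (hAB k j) (hA k j)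
        (le_trans (ih i k).1 (ih i k).2)

/-- Row sums of powers of a row-stochastic matrix are 1. -/
private theorem pow_row_sum {S : ℕ} (Q : Matrix (Fin S) (Fin S) ℝ)
    (h1 : ∀ i, ∑ j, Q i j = 1) (n : ℕ) : ∀ i, ∑ j, (Q ^ n) i j = 1 := by
  induction n with
  | zero => intro i; simp [Matrix.one_apply]
  | succ n ih =>
    intro i
    rw [pow_succ]
    simp only [Matrix.mul_apply]
    rw [Finset.sum_comm]
    calc ∑ k, ∑ j, (Q ^ n) i k * Q k j = ∑ k, (Q ^ n) i k * ∑ j, Q k j := by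
          simp [Finset.mul_sum]
      _ = ∑ k, (Q ^ n) i k := by simp [h1]
      _ = 1 := ih i

private theorem two_le_pow_add_pow {a b : ℝ} (ha : 0 ≤ a) (hb : 0 ≤ b)
    (hab : a + b = 2) : ∀ n : ℕ, 2 ≤ a ^ n + b ^ n := by
  intro n
  induction n with
  | zero => norm_num
  | succ n ih =>
    have hs : 0 ≤ (a ^ n - b ^ n) * (a - b) := by
      rcases le_total a b with h | h
      · have h1 := pow_le_pow_left₀ ha h n
        nlinarith
      · have h1 := pow_le_pow_left₀ hb h n
        nlinarith
    have h1 : a ^ (n + 1) = a ^ n * a := pow_succ a n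
    have h2 : b ^ (n + 1) = b ^ n * b := pow_succ b n
    nlinarith [pow_nonneg ha n, pow_nonneg hb n]

/-- Neumann-series representation of the resolvent applied to a vector, entrywise. -/
private theorem hasSum_value {S : ℕ} (Q : Matrix (Fin S) (Fin S) ℝ)
    (hQ : ‖Q‖ ≤ 1) {α : ℝ} (hα0 : 0 ≤ α) (hα1 : α < 1) (c : Fin S → ℝ) (s : Fin S) :
    HasSum (fun n : ℕ => α ^ n * ((Q ^ n).mulVec c s)) (((1 - α • Q)⁻¹).mulVec c s) := by
  have hnorm : ‖α • Q‖ < 1 := by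
    rw [norm_smul, Real.norm_eq_abs, abs_of_nonneg hα0]
    calc α * ‖Q‖ ≤ α * 1 := by nlinarith [norm_nonneg Q]
      _ < 1 := by linarith
  have hsum := hasSum_geom_series_inverse (α • Q) hnorm
  rw [← Matrix.nonsing_inv_eq_ringInverse] at hsum
  let φ : Matrix (Fin S) (Fin S) ℝ →ₗ[ℝ] ℝ :=
    { toFun := fun M => M.mulVec c s
      map_add' := fun M N => by simp [Matrix.add_mulVec]
      map_smul' := fun a M => by simp [Matrix.smul_mulVec] }
  have hcont : Continuous φ := φ.continuous_of_finiteDimensional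
  have h := hsum.map φ.toAddMonoidHom hcont
  have heq : (⇑φ.toAddMonoidHom ∘ fun n : ℕ => (α • Q) ^ n)
      = fun n : ℕ => α ^ n * ((Q ^ n).mulVec c s) := by
    funext n
    have hpow : (α • Q) ^ n = (α ^ n) • (Q ^ n) := smul_pow α Q n
    simp [φ, Function.comp, hpow, Matrix.smul_mulVec]
  rw [heq] at h
  exact h

/-- Deterministic relative-plus-absolute error implication
(eq. (61) of the paper, used in Lemma 4 of Theorem 3). With
`T̄ = ⌈log(2‖c‖_∞/ε_abs)/(1-α)⌉` and `λ = log(1 + ε_rel/2)/T̄`, if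
`|Q̄(s,s') - Q(s,s')| ≤ λ Q(s,s')` entrywise, then
`|v̄(s) - v(s)| ≤ (ε_rel/2) v(s) + ε_abs/2` for every state `s`, where
`v`, `v̄` are the value functions of `Q`, `Q̄` with nonnegative cost `c`. -/
theorem backward_epe_relative_error_value
    (S : ℕ) (hS : 1 ≤ S) (Q Qbar : Matrix (Fin S) (Fin S) ℝ)
    (hQnonneg : ∀ i j, 0 ≤ Q i j) (hQrow : ∀ i, ∑ j, Q i j = 1)
    (hQbarnonneg : ∀ i j, 0 ≤ Qbar i j) (hQbarrow : ∀ i, ∑ j, Qbar i j = 1)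
    (α : ℝ) (hα : α ∈ Set.Ioo (0 : ℝ) 1)
    (c : Fin S → ℝ) (hc : ∀ s, 0 ≤ c s) (hcpos : 0 < ‖c‖)
    (v vbar : Fin S → ℝ)
    (hv : v = (1 - α) • ((1 - α • Q)⁻¹).mulVec c)
    (hvbar : vbar = (1 - α) • ((1 - α • Qbar)⁻¹).mulVec c)
    (εrel εabs : ℝ) (hεrel : εrel ∈ Set.Ioo (0 : ℝ) 1)
    (hεabs : εabs ∈ Set.Ioo 0 (2 * ‖c‖))
    (Tbar : ℕ) (hTbar : Tbar = ⌈Real.log (2 * ‖c‖ / εabs) / (1 - α)⌉₊)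
    (lam : ℝ) (hlam : lam = Real.log (1 + εrel / 2) / Tbar)
    (hrel : ∀ s s', |Qbar s s' - Q s s'| ≤ lam * Q s s') :
    ∀ s, |vbar s - v s| ≤ (εrel / 2) * v s + εabs / 2 := by
  obtain ⟨hα0, hα1⟩ := hα
  obtain ⟨hεr0, hεr1⟩ := hεrel
  obtain ⟨hεa0, hεa2⟩ := hεabs
  intro s
  have h1α : 0 < 1 - α := by linarith
  -- facts about Tbar and lam
  have hlogc : 0 < Real.log (2 * ‖c‖ / εabs) := by
    apply Real.log_pos
    rw [lt_div_iff₀ hεa0]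
    linarith
  have hTpos : 0 < Tbar := by
    rw [hTbar]; exact Nat.ceil_pos.mpr (by positivity)
  have hT1 : (1 : ℝ) ≤ (Tbar : ℝ) := by exact_mod_cast hTpos
  have hTne : (Tbar : ℝ) ≠ 0 := by positivity
  have hlam0 : 0 ≤ lam := by
    rw [hlam]
    exact div_nonneg (Real.log_nonneg (by linarith)) (by positivity)
  have hlam1 : lam ≤ 1 := by
    rw [hlam, div_le_one (by positivity)]
    calc Real.log (1 + εrel / 2) ≤ (1 + εrel / 2) - 1 :=
          Real.log_le_sub_one_of_pos (by linarith)
      _ ≤ 1 := by linarith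
      _ ≤ (Tbar : ℝ) := hT1
  have hkey : (1 + lam) ^ Tbar ≤ 1 + εrel / 2 := by
    calc (1 + lam) ^ Tbar ≤ (Real.exp lam) ^ Tbar :=
          pow_le_pow_left₀ (by linarith) (by linarith [Real.add_one_le_exp lam]) _
      _ = Real.exp ((Tbar : ℝ) * lam) := (Real.exp_nat_mul lam Tbar).symm
      _ = 1 + εrel / 2 := by
          rw [hlam, mul_div_cancel₀ _ hTne]
          exact Real.exp_log (by linarith)
  have hαT : ‖c‖ * α ^ Tbar ≤ εabs / 2 := by
    have hlogα : Real.log α ≤ α - 1 := Real.log_le_sub_one_of_pos hα0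
    have hTge : Real.log (2 * ‖c‖ / εabs) / (1 - α) ≤ (Tbar : ℝ) := by
      rw [hTbar]; exact Nat.le_ceil _
    have hTge' : Real.log (2 * ‖c‖ / εabs) ≤ (1 - α) * (Tbar : ℝ) := by
      rw [div_le_iff₀ h1α] at hTge
      linarith
    have h2 : (Tbar : ℝ) * Real.log α ≤ - Real.log (2 * ‖c‖ / εabs) := by
      have := mul_le_mul_of_nonneg_left hlogα (by linarith : (0:ℝ) ≤ (Tbar : ℝ))
      nlinarith
    have h3 : α ^ Tbar ≤ εabs / (2 * ‖c‖) := by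
      calc α ^ Tbar = Real.exp ((Tbar : ℝ) * Real.log α) := by
            rw [Real.exp_nat_mul, Real.exp_log hα0]
        _ ≤ Real.exp (- Real.log (2 * ‖c‖ / εabs)) := Real.exp_le_exp.mpr h2
        _ = εabs / (2 * ‖c‖) := by
            rw [Real.exp_neg, Real.exp_log (by positivity), inv_div]
    calc ‖c‖ * α ^ Tbar ≤ ‖c‖ * (εabs / (2 * ‖c‖)) :=
          mul_le_mul_of_nonneg_left h3 (norm_nonneg c)
      _ = εabs / 2 := by field_simp
  -- series representations
  have hQn : ‖Q‖ ≤ 1 := stoch_norm_le_one Q hQnonneg hQrow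
  have hQbarn : ‖Qbar‖ ≤ 1 := stoch_norm_le_one Qbar hQbarnonneg hQbarrow
  set p : ℕ → ℝ := fun n => (Q ^ n).mulVec c s with hp
  set q : ℕ → ℝ := fun n => (Qbar ^ n).mulVec c s with hq
  have hv_sum : HasSum (fun n : ℕ => (1 - α) * (α ^ n * p n)) (v s) := by
    have h := (hasSum_value Q hQn hα0.le hα1 c s).mul_left (1 - α)
    rw [hv]
    simpa using h
  have hvbar_sum : HasSum (fun n : ℕ => (1 - α) * (α ^ n * q n)) (vbar s) := by
    have h := (hasSum_value Qbar hQbarn hα0.le hα1 c s).mul_left (1 - α)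
    rw [hvbar]
    simpa using h
  -- pointwise bounds on p, q
  have hcB : ∀ j, c j ≤ ‖c‖ := fun j =>
    le_trans (le_abs_self _) (by simpa [Real.norm_eq_abs] using norm_le_pi_norm c j)
  have hQpow := fun n => pow_entry_le Q Q hQnonneg (fun i j => le_refl _) n
  have hQbarpow := fun n => pow_entry_le Qbar Qbar hQbarnonneg (fun i j => le_refl _) n
  have hppos : ∀ n, 0 ≤ p n := by
    intro n
    simp only [hp, Matrix.mulVec, dotProduct]
    exact Finset.sum_nonneg fun j _ => mul_nonneg (hQpow n s j).1 (hc j)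
  have hqpos : ∀ n, 0 ≤ q n := by
    intro n
    simp only [hq, Matrix.mulVec, dotProduct]
    exact Finset.sum_nonneg fun j _ => mul_nonneg (hQbarpow n s j).1 (hc j)
  have hple : ∀ n, p n ≤ ‖c‖ := by
    intro n
    simp only [hp, Matrix.mulVec, dotProduct]
    calc ∑ j, (Q ^ n) s j * c j ≤ ∑ j, (Q ^ n) s j * ‖c‖ :=
          Finset.sum_le_sum fun j _ =>
            mul_le_mul_of_nonneg_left (hcB j) (hQpow n s j).1
      _ = ‖c‖ := by rw [← Finset.sum_mul, pow_row_sum Q hQrow n s, one_mul]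
  have hqle : ∀ n, q n ≤ ‖c‖ := by
    intro n
    simp only [hq, Matrix.mulVec, dotProduct]
    calc ∑ j, (Qbar ^ n) s j * c j ≤ ∑ j, (Qbar ^ n) s j * ‖c‖ :=
          Finset.sum_le_sum fun j _ =>
            mul_le_mul_of_nonneg_left (hcB j) (hQbarpow n s j).1
      _ = ‖c‖ := by rw [← Finset.sum_mul, pow_row_sum Qbar hQbarrow n s, one_mul]
  -- entrywise comparison of powers
  have hub : ∀ i j, Qbar i j ≤ ((1 + lam) • Q) i j := by
    intro i j
    have := (abs_le.mp (hrel i j)).2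
    simp only [Matrix.smul_apply, smul_eq_mul]
    linarith
  have hlb : ∀ i j, ((1 - lam) • Q) i j ≤ Qbar i j := by
    intro i j
    have := (abs_le.mp (hrel i j)).1
    simp only [Matrix.smul_apply, smul_eq_mul]
    linarith
  have hq_up : ∀ n, q n ≤ (1 + lam) ^ n * p n := by
    intro n
    have h := fun j => (pow_entry_le Qbar ((1 + lam) • Q) hQbarnonneg hub n s j).2
    have hsmul : ((1 + lam) • Q) ^ n = (1 + lam) ^ n • Q ^ n := smul_pow _ _ _
    simp only [hq, hp, Matrix.mulVec, dotProduct, Finset.mul_sum]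
    refine Finset.sum_le_sum fun j _ => ?_
    have hj := h j
    rw [hsmul, Matrix.smul_apply, smul_eq_mul] at hj
    calc (Qbar ^ n) s j * c j ≤ ((1 + lam) ^ n * (Q ^ n) s j) * c j :=
          mul_le_mul_of_nonneg_right hj (hc j)
      _ = (1 + lam) ^ n * ((Q ^ n) s j * c j) := by ring
  have hq_lo : ∀ n, (1 - lam) ^ n * p n ≤ q n := by
    intro n
    have hnn : ∀ i j, 0 ≤ ((1 - lam) • Q) i j := by
      intro i j
      simp only [Matrix.smul_apply, smul_eq_mul]
      exact mul_nonneg (by linarith) (hQnonneg i j)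
    have h := fun j => (pow_entry_le ((1 - lam) • Q) Qbar hnn hlb n s j).2
    have hsmul : ((1 - lam) • Q) ^ n = (1 - lam) ^ n • Q ^ n := smul_pow _ _ _
    simp only [hq, hp, Matrix.mulVec, dotProduct, Finset.mul_sum]
    refine Finset.sum_le_sum fun j _ => ?_
    have hj := h j
    rw [hsmul, Matrix.smul_apply, smul_eq_mul] at hj
    calc (1 - lam) ^ n * ((Q ^ n) s j * c j) = ((1 - lam) ^ n * (Q ^ n) s j) * c j := by ring
      _ ≤ (Qbar ^ n) s j * c j := mul_le_mul_of_nonneg_right hj (hc j)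
  have hdiff : ∀ n, |q n - p n| ≤ ((1 + lam) ^ n - 1) * p n := by
    intro n
    have h2 := two_le_pow_add_pow (by linarith : (0:ℝ) ≤ 1 - lam)
      (by linarith : (0:ℝ) ≤ 1 + lam) (by ring) n
    rw [abs_le]
    constructor
    · nlinarith [hq_lo n, hppos n]
    · nlinarith [hq_up n, hppos n]
  have hdiffc : ∀ n, |q n - p n| ≤ ‖c‖ := by
    intro n
    rw [abs_le]
    constructor
    · linarith [hqpos n, hple n]
    · linarith [hppos n, hqle n]
  -- the difference series
  have hg0 := hvbar_sum.sub hv_sum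
  have hgeq : (fun n => (1 - α) * (α ^ n * q n) - (1 - α) * (α ^ n * p n))
      = fun n => (1 - α) * (α ^ n * (q n - p n)) := by
    funext n; ring
  rw [hgeq] at hg0
  set g : ℕ → ℝ := fun n => (1 - α) * (α ^ n * (q n - p n)) with hgdef
  have hgsum : Summable g := hg0.summable
  have hgabs : ∀ n, |g n| = (1 - α) * (α ^ n * |q n - p n|) := by
    intro n
    rw [hgdef]
    rw [abs_mul, abs_mul, abs_of_nonneg h1α.le, abs_of_nonneg (pow_nonneg hα0.le n)]
  -- split the series
  have hsplit : ∑ n ∈ Finset.range Tbar, g n + ∑' k, g (k + Tbar) = vbar s - v s := by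
    rw [hgsum.sum_add_tsum_nat_add Tbar, hg0.tsum_eq]
  -- head bound
  have hhead : |∑ n ∈ Finset.range Tbar, g n| ≤ (εrel / 2) * v s := by
    calc |∑ n ∈ Finset.range Tbar, g n| ≤ ∑ n ∈ Finset.range Tbar, |g n| :=
          Finset.abs_sum_le_sum_abs _ _
      _ ≤ ∑ n ∈ Finset.range Tbar, (εrel / 2) * ((1 - α) * (α ^ n * p n)) := by
          refine Finset.sum_le_sum fun n hn => ?_
          have hnT : n ≤ Tbar := le_of_lt (Finset.mem_range.mp hn)
          have h3 : (1 + lam) ^ n - 1 ≤ εrel / 2 := by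
            have := pow_le_pow_right₀ (by linarith : (1:ℝ) ≤ 1 + lam) hnT
            linarith
          have h4 : |q n - p n| ≤ (εrel / 2) * p n :=
            le_trans (hdiff n) (by nlinarith [hppos n])
          rw [hgabs n]
          have h5 : α ^ n * |q n - p n| ≤ α ^ n * ((εrel / 2) * p n) :=
            mul_le_mul_of_nonneg_left h4 (pow_nonneg hα0.le n)
          nlinarith
      _ = (εrel / 2) * ∑ n ∈ Finset.range Tbar, ((1 - α) * (α ^ n * p n)) := by
          rw [Finset.mul_sum]
      _ ≤ (εrel / 2) * v s := by
          have hle : ∑ n ∈ Finset.range Tbar, ((1 - α) * (α ^ n * p n)) ≤ v s :=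
            sum_le_hasSum _
              (fun n _ => mul_nonneg h1α.le (mul_nonneg (pow_nonneg hα0.le n) (hppos n)))
              hv_sum
          exact mul_le_mul_of_nonneg_left hle (by linarith)
  -- tail bound
  have htail : |∑' k, g (k + Tbar)| ≤ εabs / 2 := by
    have hb : ∀ k, |g (k + Tbar)| ≤ ((1 - α) * α ^ Tbar * ‖c‖) * α ^ k := by
      intro k
      rw [hgabs, pow_add]
      have h6 : α ^ k * α ^ Tbar * |q (k + Tbar) - p (k + Tbar)|
          ≤ α ^ k * α ^ Tbar * ‖c‖ :=
        mul_le_mul_of_nonneg_left (hdiffc _)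
          (mul_nonneg (pow_nonneg hα0.le k) (pow_nonneg hα0.le Tbar))
      nlinarith
    have hsb : Summable (fun k => ((1 - α) * α ^ Tbar * ‖c‖) * α ^ k) :=
      (summable_geometric_of_lt_one hα0.le hα1).mul_left _
    have habs_sum : Summable (fun k => |g (k + Tbar)|) :=
      Summable.of_nonneg_of_le (fun k => abs_nonneg _) hb hsb
    have hns : Summable fun k => ‖g (k + Tbar)‖ := by
      simpa [Real.norm_eq_abs] using habs_sum
    calc |∑' k, g (k + Tbar)| ≤ ∑' k, |g (k + Tbar)| := by
          simpa [Real.norm_eq_abs] using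
            norm_tsum_le_tsum_norm (f := fun k => g (k + Tbar)) hns
      _ ≤ ∑' k, ((1 - α) * α ^ Tbar * ‖c‖) * α ^ k := habs_sum.tsum_le_tsum hb hsb
      _ = ((1 - α) * α ^ Tbar * ‖c‖) * (1 - α)⁻¹ := by
          rw [tsum_mul_left, tsum_geometric_of_lt_one hα0.le hα1]
      _ = ‖c‖ * α ^ Tbar := by field_simp
      _ ≤ εabs / 2 := hαT
  calc |vbar s - v s| = |∑ n ∈ Finset.range Tbar, g n + ∑' k, g (k + Tbar)| := by
        rw [hsplit]
    _ ≤ |∑ n ∈ Finset.range Tbar, g n| + |∑' k, g (k + Tbar)| := abs_add_le _ _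
    _ ≤ (εrel / 2) * v s + εabs / 2 := add_le_add hhead htail
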